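/- Let F be a distribution function and α > 0. There exist aₙ > 0 and bₙ ∈ ℝ such that F^{⊡n}(aₙ·x + bₙ) → P_α(x) as n → ∞ for every x ∈ ℝ, if and only if there exist aₙ > 0 and bₙ ∈ ℝ such that F(aₙ·x + bₙ)^n → Φ_α(x) as n → ∞ for every x ∈ ℝ, where Φ_α(x) = exp(−x^{−α}) for x > 0 and Φ_α(x) = 0 for x ≤ 0. In other words, the free max-domain of attraction of the Pareto distribution with exponent α coincides with the classical max-domain of attraction of the Fréchet distribution Φ_α. -/

import Mathlib

open Filter Topology

def IsDistFun (F : ℝ → ℝ) : Prop :=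
  Monotone F ∧ (∀ x, ContinuousWithinAt F (Set.Ici x) x) ∧
    Tendsto F atBot (𝓝 0) ∧ Tendsto F atTop (𝓝 1)

noncomputable def freePow (F : ℝ → ℝ) (n : ℕ) (x : ℝ) : ℝ :=
  max ((n : ℝ) * F x - ((n : ℝ) - 1)) 0

noncomputable def paretoDF (α : ℝ) (x : ℝ) : ℝ :=
  if 0 < x then max (1 - x ^ (-α)) 0 else 0

/-- The Fréchet distribution function. -/
noncomputable def frechetDF (α : ℝ) (x : ℝ) : ℝ :=
  if 0 < x then Real.exp (-x ^ (-α)) else 0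

namespace FEVaux

lemma distFun_nonneg {F : ℝ → ℝ} (hF : IsDistFun F) (x : ℝ) : 0 ≤ F x :=
  le_of_tendsto hF.2.2.1 (eventually_atBot.2 ⟨x, fun y hy => hF.1 hy⟩)

lemma distFun_le_one {F : ℝ → ℝ} (hF : IsDistFun F) (x : ℝ) : F x ≤ 1 :=
  ge_of_tendsto hF.2.2.2 (eventually_atTop.2 ⟨x, fun y hy => hF.1 hy⟩)

/-- log(1-G)/G → -1 when G → 0, G ≠ 0 eventually. -/
lemma log_ratio (G : ℕ → ℝ) (hG0 : Tendsto G atTop (𝓝 0))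
    (hGne : ∀ᶠ m in atTop, G m ≠ 0) :
    Tendsto (fun m => Real.log (1 - G m) / G m) atTop (𝓝 (-1)) := by
  have hslope : Tendsto (slope Real.log 1) (𝓝[≠] 1) (𝓝 1) := by
    simpa using (hasDerivAt_iff_tendsto_slope.mp (Real.hasDerivAt_log one_ne_zero))
  have hz : Tendsto (fun m => 1 - G m) atTop (𝓝[≠] (1:ℝ)) := by
    rw [tendsto_nhdsWithin_iff]
    constructor
    · simpa using (tendsto_const_nhds.sub hG0)
    · filter_upwards [hGne] with m hm
      simp only [Set.mem_compl_iff, Set.mem_singleton_iff]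
      intro h
      apply hm
      linarith [h]
  have := (hslope.comp hz).neg
  have heq : ∀ m, -(slope Real.log 1 (1 - G m)) = Real.log (1 - G m) / G m := by
    intro m
    rw [slope_def_field, Real.log_one]
    rw [show (1 : ℝ) - G m - 1 = -(G m) by ring]
    rw [div_neg]
    ring
  simpa [Function.comp, heq] using this


/-- If m(1-F_m) → c > 0 and F_m ≤ 1, then F_m ^ m → exp(-c). -/
lemma pow_tendsto_exp (f : ℕ → ℝ) (c : ℝ) (hc : 0 < c)
    (h : Tendsto (fun m : ℕ => (m : ℝ) * (1 - f m)) atTop (𝓝 c)) :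
    Tendsto (fun m => f m ^ m) atTop (𝓝 (Real.exp (-c))) := by
  set G : ℕ → ℝ := fun m => 1 - f m with hGdef
  have hG0 : Tendsto G atTop (𝓝 0) := by
    have h2 : Tendsto (fun m : ℕ => ((m : ℝ) * G m) * ((m : ℝ))⁻¹) atTop (𝓝 (c * 0)) :=
      h.mul tendsto_inv_atTop_nhds_zero_nat
    rw [mul_zero] at h2
    refine h2.congr' ?_
    filter_upwards [eventually_ge_atTop 1] with m hm
    have : (m : ℝ) ≠ 0 := by positivity
    field_simp
  have hGne : ∀ᶠ m in atTop, G m ≠ 0 := by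
    have := h.eventually (lt_mem_nhds (show 0 < c from hc) : ∀ᶠ x in 𝓝 c, 0 < x)
    filter_upwards [this] with m hm
    intro h0
    rw [hGdef] at h0
    simp only [h0, mul_zero] at hm
    · exact lt_irrefl 0 hm
  have hr := log_ratio G hG0 hGne
  have hmul : Tendsto (fun m : ℕ => ((m : ℝ) * G m) * (Real.log (1 - G m) / G m)) atTop
      (𝓝 (c * (-1))) := h.mul hr
  rw [show c * (-1) = -c by ring] at hmul
  have hfpos : ∀ᶠ m in atTop, 0 < f m := by
    have := hG0.eventually (gt_mem_nhds (by norm_num : (0:ℝ) < 1/2))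
    filter_upwards [this] with m hm
    simp only [hGdef] at hm
    linarith
  have hexp := (Real.continuous_exp.tendsto (-c)).comp hmul
  refine hexp.congr' ?_
  filter_upwards [hGne, hfpos] with m hGm hfm
  have h1 : (1 : ℝ) - G m = f m := by simp [hGdef]
  have h2 : ((m : ℝ) * G m) * (Real.log (1 - G m) / G m) = (m : ℝ) * Real.log (f m) := by
    rw [h1]
    field_simp
  simp only [Function.comp, h2]
  rw [Real.exp_nat_mul, Real.exp_log hfm]

/-- If m(1-F_m) → ∞ and 0 ≤ F_m, then F_m ^ m → 0. -/
lemma pow_tendsto_zero (f : ℕ → ℝ) (hf0 : ∀ m, 0 ≤ f m)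
    (h : Tendsto (fun m : ℕ => (m : ℝ) * (1 - f m)) atTop atTop) :
    Tendsto (fun m => f m ^ m) atTop (𝓝 0) := by
  have hle : ∀ m, f m ^ m ≤ Real.exp (-((m : ℝ) * (1 - f m))) := by
    intro m
    have h1 : f m ≤ Real.exp (-(1 - f m)) := by
      have := Real.add_one_le_exp (-(1 - f m))
      linarith
    calc f m ^ m ≤ Real.exp (-(1 - f m)) ^ m := pow_le_pow_left₀ (hf0 m) h1 m
      _ = Real.exp (-((m : ℝ) * (1 - f m))) := by
          rw [← Real.exp_nat_mul]; ring_nf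
  have hg : Tendsto (fun m : ℕ => Real.exp (-((m : ℝ) * (1 - f m)))) atTop (𝓝 0) :=
    Real.tendsto_exp_atBot.comp (tendsto_neg_atTop_atBot.comp h)
  exact squeeze_zero (fun m => pow_nonneg (hf0 m) m) hle hg

/-- If F_m ^ m → L ∈ (0,1) and 0 ≤ F_m ≤ 1, then m(1 - F_m) → -log L. -/
lemma nG_tendsto_of_pow (f : ℕ → ℝ) (L : ℝ) (h0 : 0 < L) (h1 : L < 1)
    (hf0 : ∀ m, 0 ≤ f m) (hf1 : ∀ m, f m ≤ 1)
    (h : Tendsto (fun m => f m ^ m) atTop (𝓝 L)) :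
    Tendsto (fun m : ℕ => (m : ℝ) * (1 - f m)) atTop (𝓝 (-Real.log L)) := by
  have hfpos : ∀ᶠ m in atTop, 0 < f m := by
    filter_upwards [h.eventually (lt_mem_nhds h0), eventually_ge_atTop 1] with m hm hm1
    rcases lt_or_eq_of_le (hf0 m) with h' | h'
    · exact h'
    · exfalso; rw [← h', zero_pow (by omega)] at hm; exact lt_irrefl 0 hm
  have hflt : ∀ᶠ m in atTop, f m < 1 := by
    filter_upwards [h.eventually (gt_mem_nhds h1)] with m hm
    rcases lt_or_eq_of_le (hf1 m) with h' | h'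
    · exact h'
    · exfalso; rw [h', one_pow] at hm; exact lt_irrefl 1 hm
  have hlog : Tendsto (fun m : ℕ => (m : ℝ) * Real.log (f m)) atTop (𝓝 (Real.log L)) := by
    have := (Real.continuousAt_log (ne_of_gt h0)).tendsto.comp h
    refine this.congr ?_
    intro m
    simp only [Function.comp]
    rw [Real.log_pow]
  have hf1' : Tendsto f atTop (𝓝 1) := by
    have h2 : Tendsto (fun m : ℕ => ((m : ℝ) * Real.log (f m)) * ((m : ℝ))⁻¹) atTop
        (𝓝 (Real.log L * 0)) := hlog.mul tendsto_inv_atTop_nhds_zero_nat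
    rw [mul_zero] at h2
    have h3 : Tendsto (fun m => Real.log (f m)) atTop (𝓝 0) := by
      refine h2.congr' ?_
      filter_upwards [eventually_ge_atTop 1] with m hm
      have : (m : ℝ) ≠ 0 := by positivity
      field_simp
    have h4 := (Real.continuous_exp.tendsto 0).comp h3
    rw [Real.exp_zero] at h4
    refine h4.congr' ?_
    filter_upwards [hfpos] with m hm
    simp [Function.comp, Real.exp_log hm]
  set G : ℕ → ℝ := fun m => 1 - f m with hGdef
  have hG0 : Tendsto G atTop (𝓝 0) := by
    have h5 : Tendsto (fun m : ℕ => 1 - f m) atTop (𝓝 (1 - 1)) :=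
      tendsto_const_nhds.sub hf1'
    rw [sub_self] at h5
    exact h5
  have hGne : ∀ᶠ m in atTop, G m ≠ 0 := by
    filter_upwards [hflt] with m hm
    simp only [hGdef]; intro h'; linarith [h']
  have hr := log_ratio G hG0 hGne
  have hrne : ∀ᶠ m in atTop, Real.log (1 - G m) / G m ≠ 0 := by
    have := hr.eventually (gt_mem_nhds (show (-1:ℝ) < -1/2 by norm_num))
    filter_upwards [this] with m hm
    intro h'; rw [h'] at hm; norm_num at hm
  have hdiv : Tendsto (fun m : ℕ => ((m : ℝ) * Real.log (f m)) / (Real.log (1 - G m) / G m))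
      atTop (𝓝 (Real.log L / (-1))) := hlog.div hr (by norm_num)
  rw [show Real.log L / (-1) = -Real.log L by ring] at hdiv
  refine hdiv.congr' ?_
  filter_upwards [hGne, hfpos, hflt] with m hGm hfm hfl
  have h1' : (1 : ℝ) - G m = f m := by simp [hGdef]
  have hlogne : Real.log (f m) ≠ 0 := ne_of_lt (Real.log_neg hfm hfl)
  rw [h1']
  rw [div_div_eq_mul_div, mul_comm ((m:ℝ) * Real.log (f m)) (G m)]
  rw [mul_div_assoc, mul_div_assoc]
  rw [div_self hlogne, mul_one, mul_comm]

/-- If F_m ^ m → 0 with 0 ≤ F_m ≤ 1, then max(m F_m - (m-1), 0) → 0. -/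
lemma freePow_tendsto_zero (f : ℕ → ℝ) (hf0 : ∀ m, 0 ≤ f m)
    (h : Tendsto (fun m => f m ^ m) atTop (𝓝 0)) :
    Tendsto (fun m : ℕ => max ((m : ℝ) * f m - ((m : ℝ) - 1)) 0) atTop (𝓝 0) := by
  have hev : ∀ᶠ m : ℕ in atTop, max ((m : ℝ) * f m - ((m : ℝ) - 1)) 0 = 0 := by
    filter_upwards [h.eventually (gt_mem_nhds (Real.exp_pos (-2))),
      eventually_ge_atTop 2] with m hm hm2
    have hm2' : (2 : ℝ) ≤ (m : ℝ) := by exact_mod_cast hm2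
    have hfb : f m ≤ 1 - 1 / (m : ℝ) := by
      by_contra hcon
      push_neg at hcon
      have ht0 : (0:ℝ) < 1 - 1 / (m:ℝ) := by
        rw [sub_pos, div_lt_one (by linarith : (0:ℝ) < (m:ℝ))]; linarith
      have hkey : Real.exp (-2) ≤ (1 - 1/(m:ℝ)) ^ m := by
        have hexp2 : Real.exp (-2/(m:ℝ)) ≤ 1 - 1/(m:ℝ) := by
          have hmp : (0:ℝ) < (m:ℝ) := by linarith
          have hub : Real.exp (-2/(m:ℝ)) ≤ (1 + 2/(m:ℝ))⁻¹ := by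
            rw [show (-2 : ℝ)/(m:ℝ) = -(2/(m:ℝ)) by ring, Real.exp_neg]
            apply inv_anti₀
            · positivity
            · have := Real.add_one_le_exp (2/(m:ℝ)); linarith
          have h2 : (1 + 2/(m:ℝ))⁻¹ ≤ 1 - 1/(m:ℝ) := by
            rw [inv_le_iff_one_le_mul₀ (by positivity)]
            have h4 : (0:ℝ) < 1/(m:ℝ) := by positivity
            have h5 : 1/(m:ℝ) ≤ 1/2 := by
              apply div_le_div_of_nonneg_left (by norm_num) (by norm_num) hm2'
            rw [show (1 - 1/(m:ℝ)) * (1 + 2/(m:ℝ)) = 1 + (1/(m:ℝ)) * (1 - 2*(1/(m:ℝ))) by ring]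
            have h6 := mul_nonneg h4.le (by linarith : (0:ℝ) ≤ 1 - 2*(1/(m:ℝ)))
            linarith
          linarith
        calc Real.exp (-2) = Real.exp (-2/(m:ℝ)) ^ m := by
              rw [← Real.exp_nat_mul]
              congr 1
              field_simp
          _ ≤ (1 - 1/(m:ℝ)) ^ m := pow_le_pow_left₀ (Real.exp_pos _).le hexp2 m
      have : Real.exp (-2) ≤ f m ^ m :=
        le_trans hkey (pow_le_pow_left₀ ht0.le hcon.le m)
      linarith
    rw [max_eq_right]
    have hmpos : (0:ℝ) < (m:ℝ) := by linarith
    have : (m:ℝ) * f m ≤ (m:ℝ) * (1 - 1/(m:ℝ)) := by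
      exact mul_le_mul_of_nonneg_left hfb hmpos.le
    have heq : (m:ℝ) * (1 - 1/(m:ℝ)) = (m:ℝ) - 1 := by field_simp
    linarith [this, heq]
  exact (tendsto_const_nhds.congr' (hev.mono fun m hm => hm.symm))


lemma step1 {F : ℝ → ℝ} {α : ℝ} (hα : 0 < α) {a b : ℕ → ℝ}
    (hfree : ∀ x : ℝ, Tendsto (fun n => freePow F n (a n * x + b n)) atTop
      (𝓝 (paretoDF α x))) :
    ∀ y : ℝ, 1 < y →
      Tendsto (fun m : ℕ => (m : ℝ) * (1 - F (a m * y + b m))) atTop (𝓝 (y ^ (-α))) := by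
  intro y hy
  have hy0 : 0 < y := lt_trans one_pos hy
  have hlt : y ^ (-α) < 1 := Real.rpow_lt_one_of_one_lt_of_neg hy (by linarith)
  have hP : paretoDF α y = 1 - y ^ (-α) := by
    rw [paretoDF, if_pos hy0, max_eq_left (by linarith)]
  have h := hfree y
  rw [hP] at h
  have h2 : Tendsto (fun m : ℕ => 1 - freePow F m (a m * y + b m)) atTop
      (𝓝 (1 - (1 - y ^ (-α)))) := tendsto_const_nhds.sub h
  rw [show (1 : ℝ) - (1 - y ^ (-α)) = y ^ (-α) by ring] at h2
  refine h2.congr' ?_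
  filter_upwards [h.eventually (lt_mem_nhds (by linarith : (0:ℝ) < 1 - y ^ (-α)))] with m hm
  rw [freePow] at hm ⊢
  have hA : 0 ≤ (m : ℝ) * F (a m * y + b m) - ((m : ℝ) - 1) := by
    by_contra hA
    push_neg at hA
    rw [max_eq_right hA.le] at hm
    exact lt_irrefl 0 hm
  rw [max_eq_left hA]
  ring

lemma compare {F : ℝ → ℝ} (hmono : Monotone F) (p q : ℕ → ℝ) (c d : ℝ) (hcd : c < d)
    (hp : Tendsto (fun m : ℕ => (m : ℝ) * (1 - F (p m))) atTop (𝓝 c))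
    (hq : Tendsto (fun m : ℕ => (m : ℝ) * (1 - F (q m))) atTop (𝓝 d)) :
    ∀ᶠ m in atTop, q m ≤ p m := by
  filter_upwards [hp.eventually_lt hq hcd, eventually_ge_atTop 1] with m hm hm1
  by_contra hpq
  push_neg at hpq
  have hle : F (p m) ≤ F (q m) := hmono hpq.le
  have hmpos : (0:ℝ) < (m:ℝ) := by exact_mod_cast Nat.lt_of_lt_of_le Nat.zero_lt_one hm1
  nlinarith

lemma step2 {F : ℝ → ℝ} (hF : IsDistFun F) {α : ℝ} (hα : 0 < α) {a b : ℕ → ℝ}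
    (ha : ∀ n, 0 < a n)
    (h1 : ∀ y : ℝ, 1 < y →
      Tendsto (fun m : ℕ => (m : ℝ) * (1 - F (a m * y + b m))) atTop (𝓝 (y ^ (-α))))
    {x : ℝ} (hx : 0 < x) :
    Tendsto (fun m : ℕ => (m : ℝ) * (1 - F (a m * x + b m))) atTop (𝓝 (x ^ (-α))) := by
  -- choose k with (2/x)^α < k
  obtain ⟨k, hk, hk1⟩ : ∃ k : ℕ, (2 / x) ^ α < (k : ℝ) ∧ 1 ≤ k := by
    obtain ⟨k0, hk0⟩ := exists_nat_gt ((2/x) ^ α)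
    refine ⟨k0 + 1, lt_of_lt_of_le hk0 ?_, Nat.le_add_left 1 k0⟩
    exact_mod_cast Nat.le_succ k0
  have hkR : (1:ℝ) ≤ (k:ℝ) := by exact_mod_cast hk1
  have hkpos : (0:ℝ) < (k:ℝ) := by linarith
  set K : ℝ := (k : ℝ) ^ (α⁻¹) with hKdef
  have hKpos : 0 < K := Real.rpow_pos_of_pos hkpos _
  have hK1 : 1 ≤ K := Real.one_le_rpow hkR (by positivity)
  have hKx : 2 < K * x := by
    have h2x : (0:ℝ) < 2/x := by positivity
    have h3 := Real.rpow_lt_rpow (Real.rpow_pos_of_pos h2x α).le hk (inv_pos.2 hα)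
    rw [← Real.rpow_mul h2x.le, mul_inv_cancel₀ hα.ne', Real.rpow_one] at h3
    rw [div_lt_iff₀ hx] at h3
    linarith
  have hcomp : ∀ t : ℝ, 0 < t → (k:ℝ) * (K * t) ^ (-α) = t ^ (-α) := by
    intro t ht
    rw [Real.mul_rpow hKpos.le ht.le]
    have hKα : K ^ (-α) = (k:ℝ)⁻¹ := by
      rw [hKdef, ← Real.rpow_mul hkpos.le]
      rw [show α⁻¹ * (-α) = -1 by field_simp]
      exact Real.rpow_neg_one _
    rw [hKα, ← mul_assoc, mul_inv_cancel₀ hkpos.ne', one_mul]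
  -- index map
  set nn : ℕ → ℕ := fun m => m / k + 1 with hnndef
  have hnn_pos : ∀ m, (0:ℝ) < (nn m : ℝ) := by
    intro m
    have : 0 < nn m := Nat.succ_pos _
    exact_mod_cast this
  have hnn_ub : ∀ m : ℕ, (nn m : ℝ) ≤ (m:ℝ)/(k:ℝ) + 1 := by
    intro m
    have := (Nat.cast_div_le (m := m) (n := k) : ((m / k : ℕ) : ℝ) ≤ (m:ℝ)/(k:ℝ))
    push_cast [hnndef]
    linarith
  have hnn_lb : ∀ m : ℕ, (m:ℝ)/(k:ℝ) < (nn m : ℝ) := by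
    intro m
    have h5 : m < k * (m / k) + k := by
      have := Nat.div_add_mod m k
      have := Nat.mod_lt m (show 0 < k by omega)
      omega
    have h6 : (m:ℝ) < (k:ℝ) * ((m / k : ℕ) : ℝ) + (k:ℝ) := by exact_mod_cast h5
    rw [div_lt_iff₀ hkpos]
    push_cast [hnndef]
    linarith
  have N1 : Tendsto nn atTop atTop := by
    refine tendsto_atTop_atTop.2 fun N => ⟨N * k, fun m hm => ?_⟩
    have : N ≤ m / k := (Nat.le_div_iff_mul_le (by omega)).2 hm
    simp only [hnndef]
    omega
  have N2 : Tendsto (fun m : ℕ => (m:ℝ)/(nn m : ℝ)) atTop (𝓝 (k:ℝ)) := by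
    have L1 : Tendsto (fun m : ℕ => (k:ℝ) - (k:ℝ)^2 * ((m:ℝ))⁻¹) atTop (𝓝 ((k:ℝ) - (k:ℝ)^2 * 0)) :=
      tendsto_const_nhds.sub (tendsto_const_nhds.mul tendsto_inv_atTop_nhds_zero_nat)
    rw [mul_zero, sub_zero] at L1
    refine tendsto_of_tendsto_of_tendsto_of_le_of_le' L1 tendsto_const_nhds ?_ ?_
    · filter_upwards [eventually_ge_atTop 1] with m hm
      have hm1 : (1:ℝ) ≤ (m:ℝ) := by exact_mod_cast hm
      have hmpos : (0:ℝ) < (m:ℝ) := by linarith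
      have hd : (0:ℝ) < (m:ℝ)/(k:ℝ) + 1 := by positivity
      have step : (m:ℝ)/((m:ℝ)/(k:ℝ) + 1) ≤ (m:ℝ)/(nn m : ℝ) :=
        div_le_div_of_nonneg_left hmpos.le (hnn_pos m) (hnn_ub m)
      refine le_trans ?_ step
      rw [le_div_iff₀ hd]
      have hexp : ((k:ℝ) - (k:ℝ)^2 * ((m:ℝ))⁻¹) * ((m:ℝ)/(k:ℝ) + 1)
          = (m:ℝ) - (k:ℝ)^2 * ((m:ℝ))⁻¹ := by
        field_simp
        ring
      rw [hexp]
      have : (0:ℝ) ≤ (k:ℝ)^2 * ((m:ℝ))⁻¹ := by positivity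
      linarith
    · filter_upwards with m
      rw [div_le_iff₀ (hnn_pos m)]
      have := hnn_lb m
      rw [div_lt_iff₀ hkpos] at this
      linarith [this]
  -- scaled limit along nn
  have hβ : ∀ z : ℝ, 1 < z →
      Tendsto (fun m : ℕ => (m:ℝ) * (1 - F (a (nn m) * z + b (nn m)))) atTop
        (𝓝 ((k:ℝ) * z ^ (-α))) := by
    intro z hz
    have hcompose : Tendsto (fun m : ℕ => ((nn m : ℝ)) * (1 - F (a (nn m) * z + b (nn m))))
        atTop (𝓝 (z ^ (-α))) := (h1 z hz).comp N1
    have hmul := N2.mul hcompose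
    refine hmul.congr ?_
    intro m
    have hne : ((nn m : ℝ)) ≠ 0 := (hnn_pos m).ne'
    field_simp
  have hanti : ∀ u v : ℝ, 0 < u → u < v → v ^ (-α) < u ^ (-α) := by
    intro u v hu huv
    rw [Real.rpow_neg hu.le, Real.rpow_neg (by linarith)]
    exact inv_strictAnti₀ (Real.rpow_pos_of_pos hu α) (Real.rpow_lt_rpow hu.le huv hα)
  have hsand_le : ∀ y t : ℝ, 1 < y → 0 < t → 1 < K * t → y ^ (-α) < t ^ (-α) →
      ∀ᶠ m in atTop, a (nn m) * (K * t) + b (nn m) ≤ a m * y + b m := by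
    intro y t hy ht ht1 hlt
    have hq := hβ (K * t) ht1
    rw [hcomp t ht] at hq
    exact compare hF.1 _ _ _ _ hlt (h1 y hy) hq
  have hsand_ge : ∀ y t : ℝ, 1 < y → 0 < t → 1 < K * t → t ^ (-α) < y ^ (-α) →
      ∀ᶠ m in atTop, a m * y + b m ≤ a (nn m) * (K * t) + b (nn m) := by
    intro y t hy ht ht1 hlt
    have hq := hβ (K * t) ht1
    rw [hcomp t ht] at hq
    exact compare hF.1 _ _ _ _ hlt hq (h1 y hy)
  -- the four anchor inequalities, for 0 < ε < 1/2
  have hanchor : ∀ ε : ℝ, 0 < ε → ε < 1/2 →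
      (∀ᶠ m in atTop,
        (a m * x + b m ≤ a (nn m) * (K * (x + ε * (5*x+12))) + b (nn m)) ∧
        (a (nn m) * (K * (x - ε * (5*x+12))) + b (nn m) ≤ a m * x + b m)) := by
    intro ε hε hε2
    have hKt : ∀ t : ℝ, 1 < t → 1 < K * t := fun t ht =>
      lt_of_lt_of_le ht (le_mul_of_one_le_left (by linarith) hK1)
    have A1 := hsand_le 2 (2*(1-ε)) (by norm_num) (by linarith) (hKt _ (by linarith))
      (hanti (2*(1-ε)) 2 (by linarith) (by linarith))
    have A2 := hsand_ge 2 (2*(1+ε)) (by norm_num) (by linarith) (hKt _ (by linarith))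
      (hanti 2 (2*(1+ε)) (by norm_num) (by linarith))
    have A3 := hsand_le 3 (3*(1-ε)) (by norm_num) (by linarith) (hKt _ (by linarith))
      (hanti (3*(1-ε)) 3 (by linarith) (by linarith))
    have A4 := hsand_ge 3 (3*(1+ε)) (by norm_num) (by linarith) (hKt _ (by linarith))
      (hanti 3 (3*(1+ε)) (by norm_num) (by linarith))
    filter_upwards [A1, A2, A3, A4] with m hA1 hA2 hA3 hA4
    have hnpos := ha (nn m)
    have haub : a m ≤ a (nn m) * (K * (1 + 5*ε)) := by linarith
    have halb : a (nn m) * (K * (1 - 5*ε)) ≤ a m := by linarith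
    have hbub' : b m ≤ a (nn m) * (K * (12*ε)) + b (nn m) := by linarith
    have hblb : a (nn m) * (K * (-(12*ε))) + b (nn m) ≤ b m := by linarith
    constructor
    · have hax : a m * x ≤ a (nn m) * (K * (1 + 5*ε)) * x :=
        mul_le_mul_of_nonneg_right haub hx.le
      linarith
    · have hax : a (nn m) * (K * (1 - 5*ε)) * x ≤ a m * x :=
        mul_le_mul_of_nonneg_right halb hx.le
      linarith
  -- conclude via the order characterization of tendsto
  have hxa : (0:ℝ) < x ^ (-α) := Real.rpow_pos_of_pos hx _
  refine tendsto_order.2 ⟨?_, ?_⟩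
  · -- lower bounds
    intro c hc
    have hcont : Tendsto (fun δ : ℝ => (x + δ) ^ (-α)) (𝓝 0) (𝓝 (x ^ (-α))) := by
      have h2 : ContinuousAt (fun u : ℝ => u ^ (-α)) x :=
        Real.continuousAt_rpow_const _ _ (Or.inl hx.ne')
      have h3 : Tendsto (fun δ : ℝ => x + δ) (𝓝 0) (𝓝 x) := by
        have := (continuous_const.add continuous_id (f := fun δ : ℝ => x)).tendsto (0:ℝ)
        simpa [Pi.add_def] using this
      exact Filter.Tendsto.comp h2 h3
    have hev : ∀ᶠ δ in 𝓝 (0:ℝ), c < (x + δ) ^ (-α) := hcont.eventually (lt_mem_nhds hc)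
    have hlt1 : ∀ᶠ δ in 𝓝 (0:ℝ), δ < 1 := gt_mem_nhds zero_lt_one
    obtain ⟨δ, ⟨hδc, hδ1⟩, hδpos'⟩ :=
      ((((hev.and hlt1)).filter_mono (nhdsWithin_le_nhds (s := Set.Ioi (0:ℝ)))).and
        eventually_mem_nhdsWithin).exists
    rw [Set.mem_Ioi] at hδpos'
    set ε : ℝ := δ / (5*x+12) with hεdef
    have h5x : (0:ℝ) < 5*x+12 := by linarith
    have hεpos : 0 < ε := by positivity
    have hεhalf : ε < 1/2 := by
      rw [hεdef, div_lt_iff₀ h5x]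
      linarith
    have hδeq : ε * (5*x+12) = δ := by
      rw [hεdef]; field_simp
    have hub := (hanchor ε hεpos hεhalf).mono (fun m hm => hm.1)
    rw [hδeq] at hub
    have hq := hβ (K * (x + δ)) (by
      have h6 := mul_pos hKpos hδpos'
      rw [mul_add]; linarith)
    rw [hcomp (x+δ) (by linarith)] at hq
    have hev2 := hq.eventually (lt_mem_nhds hδc)
    filter_upwards [hub, hev2] with m hm1 hm2
    have hFm : F (a m * x + b m) ≤ F (a (nn m) * (K * (x + δ)) + b (nn m)) := hF.1 hm1
    have hm0 : (0:ℝ) ≤ (m:ℝ) := Nat.cast_nonneg m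
    have : (m:ℝ) * (1 - F (a (nn m) * (K * (x + δ)) + b (nn m)))
        ≤ (m:ℝ) * (1 - F (a m * x + b m)) :=
      mul_le_mul_of_nonneg_left (by linarith) hm0
    linarith
  · -- upper bounds
    intro c hc
    have hcont : Tendsto (fun δ : ℝ => (x - δ) ^ (-α)) (𝓝 0) (𝓝 (x ^ (-α))) := by
      have h2 : ContinuousAt (fun u : ℝ => u ^ (-α)) x :=
        Real.continuousAt_rpow_const _ _ (Or.inl hx.ne')
      have h3 : Tendsto (fun δ : ℝ => x - δ) (𝓝 0) (𝓝 x) := by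
        have := (continuous_const.sub continuous_id (f := fun δ : ℝ => x)).tendsto (0:ℝ)
        simpa [Pi.sub_def] using this
      exact Filter.Tendsto.comp h2 h3
    have hev : ∀ᶠ δ in 𝓝 (0:ℝ), (x - δ) ^ (-α) < c := hcont.eventually (gt_mem_nhds hc)
    have hlt1 : ∀ᶠ δ in 𝓝 (0:ℝ), δ < 1 := gt_mem_nhds zero_lt_one
    have hd0 : (0:ℝ) < x - 2/K := by
      rw [sub_pos, div_lt_iff₀ hKpos]
      linarith
    have hltd0 : ∀ᶠ δ in 𝓝 (0:ℝ), δ < x - 2/K := gt_mem_nhds hd0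
    obtain ⟨δ, ⟨⟨hδc, hδ1⟩, hδd0⟩, hδpos'⟩ :=
      (((((hev.and hlt1)).and hltd0).filter_mono (nhdsWithin_le_nhds (s := Set.Ioi (0:ℝ)))).and
        eventually_mem_nhdsWithin).exists
    rw [Set.mem_Ioi] at hδpos'
    have hKδ : K * δ < K * x - 2 := by
      have := (mul_lt_mul_iff_right₀ hKpos).2 hδd0
      rw [mul_sub, mul_div_cancel₀ _ hKpos.ne'] at this
      linarith
    set ε : ℝ := δ / (5*x+12) with hεdef
    have h5x : (0:ℝ) < 5*x+12 := by linarith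
    have hεpos : 0 < ε := by positivity
    have hεhalf : ε < 1/2 := by
      rw [hεdef, div_lt_iff₀ h5x]
      linarith
    have hδeq : ε * (5*x+12) = δ := by
      rw [hεdef]; field_simp
    have hlb := (hanchor ε hεpos hεhalf).mono (fun m hm => hm.2)
    rw [hδeq] at hlb
    have hxδ : 0 < x - δ := by
      have h7 : (0:ℝ) < 2/K := by positivity
      linarith
    have hq := hβ (K * (x - δ)) (by rw [mul_sub]; linarith)
    rw [hcomp (x-δ) hxδ] at hq
    have hev2 := hq.eventually (gt_mem_nhds hδc)
    filter_upwards [hlb, hev2] with m hm1 hm2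
    have hFm : F (a (nn m) * (K * (x - δ)) + b (nn m)) ≤ F (a m * x + b m) := hF.1 hm1
    have hm0 : (0:ℝ) ≤ (m:ℝ) := Nat.cast_nonneg m
    have : (m:ℝ) * (1 - F (a m * x + b m))
        ≤ (m:ℝ) * (1 - F (a (nn m) * (K * (x - δ)) + b (nn m))) :=
      mul_le_mul_of_nonneg_left (by linarith) hm0
    linarith

end FEVaux

/-- The free max-domain of attraction of the Pareto law with exponent `α`
coincides with the classical max-domain of attraction of the Fréchet law. -/
theorem freeDomAttr_pareto_iff_classicalDomAttr_frechet
    (F : ℝ → ℝ) (hF : IsDistFun F) (α : ℝ) (hα : 0 < α) :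
    (∃ a b : ℕ → ℝ, (∀ n, 0 < a n) ∧
        ∀ x : ℝ, Tendsto (fun n => freePow F n (a n * x + b n)) atTop
          (𝓝 (paretoDF α x))) ↔
      (∃ a b : ℕ → ℝ, (∀ n, 0 < a n) ∧
        ∀ x : ℝ, Tendsto (fun n => F (a n * x + b n) ^ n) atTop
          (𝓝 (frechetDF α x))) := by
  constructor
  · rintro ⟨a, b, ha, hfree⟩
    refine ⟨a, b, ha, fun x => ?_⟩
    have hs1 := FEVaux.step1 hα hfree
    by_cases hx : 0 < x
    · have hs2 := FEVaux.step2 hF hα ha hs1 hx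
      have hxa : 0 < x ^ (-α) := Real.rpow_pos_of_pos hx _
      have hfin := FEVaux.pow_tendsto_exp (fun m => F (a m * x + b m)) _ hxa hs2
      rw [frechetDF, if_pos hx]
      exact hfin
    · push_neg at hx
      rw [frechetDF, if_neg (not_lt.2 hx)]
      apply FEVaux.pow_tendsto_zero _ (fun m => FEVaux.distFun_nonneg hF _)
      refine tendsto_atTop.2 fun C => ?_
      set D : ℝ := max C 1 + 1 with hD
      have hD0 : 0 < D := by
        have : (1:ℝ) ≤ max C 1 := le_max_right _ _
        rw [hD]; linarith
      set x' : ℝ := D ^ (-α⁻¹) with hx'def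
      have hx'pos : 0 < x' := Real.rpow_pos_of_pos hD0 _
      have hx'val : x' ^ (-α) = D := by
        rw [hx'def, ← Real.rpow_mul hD0.le]
        rw [show -α⁻¹ * -α = 1 by field_simp]
        exact Real.rpow_one D
      have hs2 := FEVaux.step2 hF hα ha hs1 hx'pos
      rw [hx'val] at hs2
      have hCD : C < D := by
        have : C ≤ max C 1 := le_max_left C 1
        rw [hD]; linarith
      have hev := hs2.eventually (lt_mem_nhds hCD)
      filter_upwards [hev] with m hm
      have hle : a m * x + b m ≤ a m * x' + b m := by
        have h9 : a m * x ≤ a m * x' :=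
          mul_le_mul_of_nonneg_left (by linarith) (ha m).le
        linarith
      have hFle := hF.1 hle
      have h10 : (m:ℝ)*(1 - F (a m * x' + b m)) ≤ (m:ℝ)*(1 - F (a m * x + b m)) :=
        mul_le_mul_of_nonneg_left (by linarith) (Nat.cast_nonneg m)
      linarith
  · rintro ⟨a, b, ha, hcl⟩
    refine ⟨a, b, ha, fun x => ?_⟩
    by_cases hx : 0 < x
    · have h := hcl x
      rw [frechetDF, if_pos hx] at h
      have hxa : 0 < x ^ (-α) := Real.rpow_pos_of_pos hx _
      have hL0 : 0 < Real.exp (-x^(-α)) := Real.exp_pos _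
      have hL1 : Real.exp (-x^(-α)) < 1 := by
        rw [Real.exp_lt_one_iff]
        linarith
      have hnG := FEVaux.nG_tendsto_of_pow (fun m => F (a m * x + b m)) _ hL0 hL1
        (fun m => FEVaux.distFun_nonneg hF _) (fun m => FEVaux.distFun_le_one hF _) h
      rw [Real.log_exp, neg_neg] at hnG
      have hmax : Tendsto (fun m : ℕ => max (1 - (m:ℝ)*(1 - F (a m * x + b m))) 0) atTop
          (𝓝 (max (1 - x^(-α)) 0)) :=
        (tendsto_const_nhds.sub hnG).max tendsto_const_nhds
      rw [paretoDF, if_pos hx]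
      refine hmax.congr fun m => ?_
      rw [freePow]
      congr 1
      ring
    · push_neg at hx
      have h := hcl x
      rw [frechetDF, if_neg (not_lt.2 hx)] at h
      rw [paretoDF, if_neg (not_lt.2 hx)]
      exact FEVaux.freePow_tendsto_zero (fun m => F (a m * x + b m))
        (fun m => FEVaux.distFun_nonneg hF _) h
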